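/- Under Assumptions (A1) and (A2), for every v ∈ ℝ^N one has ⟨(γ₂I − S₁)(γ₁I + S₁)⁻¹v, v⟩ ≤ (2t − 1)·⟨(γ₂I − S₂)(γ₁I + S₂)⁻¹v, v⟩. -/

import Mathlib

open Matrix

private lemma quad_nonneg' {N : ℕ} {M : Matrix (Fin N) (Fin N) ℝ} (hM : M.PosSemidef)
    (v : Fin N → ℝ) : 0 ≤ (M *ᵥ v) ⬝ᵥ v := by
  have h := hM.dotProduct_mulVec_nonneg v
  rw [star_trivial] at h
  rwa [dotProduct_comm]

private lemma quad_sym' {N : ℕ} {P : Matrix (Fin N) (Fin N) ℝ} (hP : P.IsHermitian)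
    (x y : Fin N → ℝ) : x ⬝ᵥ (P *ᵥ y) = (P *ᵥ x) ⬝ᵥ y := by
  rw [dotProduct_mulVec, ← mulVec_transpose, ← conjTranspose_eq_transpose_of_trivial, hP.eq]

private lemma rayleigh_ub' {N : ℕ} {M : Matrix (Fin N) (Fin N) ℝ} (hM : M.IsHermitian)
    {μ : ℝ} (hμ : ∀ i, hM.eigenvalues i ≤ μ) (v : Fin N → ℝ) :
    (M *ᵥ v) ⬝ᵥ v ≤ μ * (v ⬝ᵥ v) := by
  have hdiag : Matrix.PosSemidef (Matrix.diagonal (fun i => μ - hM.eigenvalues i)) :=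
    Matrix.PosSemidef.diagonal (fun i => sub_nonneg.mpr (hμ i))
  have hP : (μ • (1 : Matrix (Fin N) (Fin N) ℝ) - M).PosSemidef := by
    have h := hdiag.mul_mul_conjTranspose_same (hM.eigenvectorUnitary : Matrix (Fin N) (Fin N) ℝ)
    have hU : (hM.eigenvectorUnitary : Matrix (Fin N) (Fin N) ℝ) *
        star (hM.eigenvectorUnitary : Matrix (Fin N) (Fin N) ℝ) = 1 :=
      (Matrix.mem_unitaryGroup_iff).mp hM.eigenvectorUnitary.2
    have key : (hM.eigenvectorUnitary : Matrix (Fin N) (Fin N) ℝ) *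
        Matrix.diagonal (fun i => μ - hM.eigenvalues i) *
        (hM.eigenvectorUnitary : Matrix (Fin N) (Fin N) ℝ)ᴴ
        = μ • (1 : Matrix (Fin N) (Fin N) ℝ) - M := by
      have hd : Matrix.diagonal (fun i => μ - hM.eigenvalues i)
          = μ • (1 : Matrix (Fin N) (Fin N) ℝ) - Matrix.diagonal hM.eigenvalues := by
        rw [← diagonal_sub, smul_one_eq_diagonal]
      have hspec : (hM.eigenvectorUnitary : Matrix (Fin N) (Fin N) ℝ) *
          Matrix.diagonal hM.eigenvalues *
          (hM.eigenvectorUnitary : Matrix (Fin N) (Fin N) ℝ)ᴴ = M := by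
        have := hM.spectral_theorem
        simpa [Matrix.star_eq_conjTranspose] using this.symm
      rw [hd, Matrix.mul_sub, Matrix.sub_mul, hspec, Matrix.mul_smul, Matrix.mul_one,
        Matrix.smul_mul, ← Matrix.star_eq_conjTranspose, hU]
    rwa [key] at h
  have h0 := quad_nonneg' hP v
  rw [sub_mulVec, smul_mulVec, one_mulVec, sub_dotProduct, smul_dotProduct,
    smul_eq_mul] at h0
  linarith

private lemma inv_quad_ge' {N : ℕ} {P : Matrix (Fin N) (Fin N) ℝ} (hP : P.PosDef)
    (v w : Fin N → ℝ) :
    2 * (v ⬝ᵥ w) - (P *ᵥ w) ⬝ᵥ w ≤ (P⁻¹ *ᵥ v) ⬝ᵥ v := by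
  set u := P⁻¹ *ᵥ v with hu_def
  have hu : P *ᵥ u = v := by
    rw [hu_def, mulVec_mulVec, Matrix.mul_nonsing_inv _ hP.det_pos.ne'.isUnit, one_mulVec]
  have h0 := quad_nonneg' hP.posSemidef (u - w)
  rw [mulVec_sub, hu, sub_dotProduct, dotProduct_sub, dotProduct_sub] at h0
  have h1 : (P *ᵥ w) ⬝ᵥ u = v ⬝ᵥ w := by
    rw [← quad_sym' hP.isHermitian, hu, dotProduct_comm]
  have h2 : v ⬝ᵥ u = u ⬝ᵥ v := dotProduct_comm _ _
  linarith

private lemma dp_self_nonneg' {N : ℕ} (v : Fin N → ℝ) : 0 ≤ v ⬝ᵥ v :=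
  Finset.sum_nonneg fun i _ => mul_self_nonneg (v i)

private lemma prod_eq' {N : ℕ} {S : Matrix (Fin N) (Fin N) ℝ} (γ1 γ2 : ℝ)
    (h : (γ1 • (1 : Matrix (Fin N) (Fin N) ℝ) + S).PosDef) :
    (γ2 • (1 : Matrix (Fin N) (Fin N) ℝ) - S) *
        (γ1 • (1 : Matrix (Fin N) (Fin N) ℝ) + S)⁻¹
      = (γ1 + γ2) • (γ1 • (1 : Matrix (Fin N) (Fin N) ℝ) + S)⁻¹ - 1 := by
  have h1 : γ2 • (1 : Matrix (Fin N) (Fin N) ℝ) - S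
      = (γ1 + γ2) • (1 : Matrix (Fin N) (Fin N) ℝ) - (γ1 • 1 + S) := by
    rw [add_smul]; abel
  rw [h1, Matrix.sub_mul, Matrix.smul_mul, Matrix.one_mul,
    Matrix.mul_nonsing_inv _ h.det_pos.ne'.isUnit]

private lemma smul_one_posDef' {N : ℕ} {γ : ℝ} (hγ : 0 < γ) :
    (γ • (1 : Matrix (Fin N) (Fin N) ℝ)).PosDef := by
  refine Matrix.PosDef.of_dotProduct_mulVec_pos ?_ ?_
  · show (γ • (1 : Matrix (Fin N) (Fin N) ℝ))ᴴ = _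
    rw [conjTranspose_smul, star_trivial, isHermitian_one.eq]
  · intro x hx
    rw [smul_mulVec, one_mulVec, dotProduct_smul, smul_eq_mul]
    exact mul_pos hγ (by rwa [dotProduct_star_self_pos_iff])

/-- under Assumptions (A1) and (A2), for every `v ∈ ℝ^N` one has
`⟨(γ₂I - S₁)(γ₁I + S₁)⁻¹v, v⟩ ≤ (2t - 1)·⟨(γ₂I - S₂)(γ₁I + S₂)⁻¹v, v⟩`. -/
theorem direct_form_comparison (N : ℕ) (hN : 1 ≤ N)
    (S1 S2 : Matrix (Fin N) (Fin N) ℝ) (hS1 : S1.PosDef) (hS2 : S2.PosDef)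
    (lmin1 lmax1 lmin2 lmax2 : ℝ)
    (hlmin1 : IsLeast (Set.range hS1.isHermitian.eigenvalues) lmin1)
    (hlmax1 : IsGreatest (Set.range hS1.isHermitian.eigenvalues) lmax1)
    (hlmin2 : IsLeast (Set.range hS2.isHermitian.eigenvalues) lmin2)
    (hlmax2 : IsGreatest (Set.range hS2.isHermitian.eigenvalues) lmax2)
    (s t : ℝ) (hs : 0 < s) (hs1 : s ≤ 1) (ht : 1 ≤ t)
    (hA1 : ∀ v : Fin N → ℝ,
      s * ((S1 *ᵥ v) ⬝ᵥ v) ≤ (S2 *ᵥ v) ⬝ᵥ v ∧ (S2 *ᵥ v) ⬝ᵥ v ≤ t * ((S1 *ᵥ v) ⬝ᵥ v))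
    (γ1 γ2 : ℝ) (hγ1 : 0 < γ1) (hγ1' : γ1 ≤ min lmin1 lmin2)
    (hγ2 : 3 * max lmax1 lmax2 ≤ γ2) :
    ∀ v : Fin N → ℝ,
      (((γ2 • (1 : Matrix (Fin N) (Fin N) ℝ) - S1) *
          (γ1 • (1 : Matrix (Fin N) (Fin N) ℝ) + S1)⁻¹) *ᵥ v) ⬝ᵥ v ≤
        (2 * t - 1) *
          ((((γ2 • (1 : Matrix (Fin N) (Fin N) ℝ) - S2) *
            (γ1 • (1 : Matrix (Fin N) (Fin N) ℝ) + S2)⁻¹) *ᵥ v) ⬝ᵥ v) := by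
  intro v
  have ht0 : (0:ℝ) < t := lt_of_lt_of_le one_pos ht
  have hA1p : (γ1 • (1 : Matrix (Fin N) (Fin N) ℝ) + S1).PosDef :=
    (smul_one_posDef' hγ1).add_posSemidef hS1.posSemidef
  have hA2p : (γ1 • (1 : Matrix (Fin N) (Fin N) ℝ) + S2).PosDef :=
    (smul_one_posDef' hγ1).add_posSemidef hS2.posSemidef
  set a : ℝ := ((γ1 • (1 : Matrix (Fin N) (Fin N) ℝ) + S1)⁻¹ *ᵥ v) ⬝ᵥ v with ha_def
  set b : ℝ := ((γ1 • (1 : Matrix (Fin N) (Fin N) ℝ) + S2)⁻¹ *ᵥ v) ⬝ᵥ v with hb_def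
  set n : ℝ := v ⬝ᵥ v with hn_def
  have hn : 0 ≤ n := dp_self_nonneg' v
  -- rewrite both sides
  have e1 : (((γ2 • (1 : Matrix (Fin N) (Fin N) ℝ) - S1) *
      (γ1 • (1 : Matrix (Fin N) (Fin N) ℝ) + S1)⁻¹) *ᵥ v) ⬝ᵥ v = (γ1 + γ2) * a - n := by
    rw [prod_eq' γ1 γ2 hA1p, sub_mulVec, smul_mulVec, one_mulVec, sub_dotProduct,
      smul_dotProduct, smul_eq_mul]
  have e2 : (((γ2 • (1 : Matrix (Fin N) (Fin N) ℝ) - S2) *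
      (γ1 • (1 : Matrix (Fin N) (Fin N) ℝ) + S2)⁻¹) *ᵥ v) ⬝ᵥ v = (γ1 + γ2) * b - n := by
    rw [prod_eq' γ1 γ2 hA2p, sub_mulVec, smul_mulVec, one_mulVec, sub_dotProduct,
      smul_dotProduct, smul_eq_mul]
  rw [e1, e2]
  -- eigenvalue facts
  have hlmax2pos : 0 < lmax2 := by
    obtain ⟨i, hi⟩ := hlmax2.1
    exact hi ▸ hS2.eigenvalues_pos i
  have hγ1lmax2 : γ1 ≤ lmax2 :=
    (hγ1'.trans (min_le_right _ _)).trans (hlmax2.2 hlmin2.1)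
  have hγ2' : 3 * lmax2 ≤ γ2 := le_trans (by nlinarith [le_max_right lmax1 lmax2]) hγ2
  -- a ≤ t * b
  have hab : a ≤ t * b := by
    set u1 : Fin N → ℝ := (γ1 • (1 : Matrix (Fin N) (Fin N) ℝ) + S1)⁻¹ *ᵥ v with hu1_def
    set w : Fin N → ℝ := t⁻¹ • u1 with hw_def
    have hu1 : (γ1 • (1 : Matrix (Fin N) (Fin N) ℝ) + S1) *ᵥ u1 = v := by
      rw [hu1_def, mulVec_mulVec, Matrix.mul_nonsing_inv _ hA1p.det_pos.ne'.isUnit, one_mulVec]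
    have h4 := inv_quad_ge' hA2p v w
    have hww : (0:ℝ) ≤ w ⬝ᵥ w := dp_self_nonneg' w
    have hS : ((γ1 • (1 : Matrix (Fin N) (Fin N) ℝ) + S2) *ᵥ w) ⬝ᵥ w ≤
        t * (((γ1 • (1 : Matrix (Fin N) (Fin N) ℝ) + S1) *ᵥ w) ⬝ᵥ w) := by
      rw [add_mulVec, add_mulVec, smul_mulVec, one_mulVec, add_dotProduct,
        add_dotProduct, smul_dotProduct, smul_eq_mul]
      have h5 := (hA1 w).2
      nlinarith [h5, mul_nonneg (mul_nonneg hγ1.le hww) (sub_nonneg.mpr ht)]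
    have hvw : v ⬝ᵥ w = t⁻¹ * a := by
      rw [hw_def, dotProduct_smul, smul_eq_mul, dotProduct_comm, ← ha_def]
    have hA1w : ((γ1 • (1 : Matrix (Fin N) (Fin N) ℝ) + S1) *ᵥ w) ⬝ᵥ w
        = t⁻¹ * (t⁻¹ * a) := by
      rw [hw_def, mulVec_smul, hu1, smul_dotProduct, dotProduct_smul, smul_eq_mul,
        smul_eq_mul, dotProduct_comm, ← ha_def]
    rw [← hb_def] at h4
    have h7 : t * (t⁻¹ * (t⁻¹ * a)) = t⁻¹ * a := by
      field_simp
    have hb_ge : t⁻¹ * a ≤ b := by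
      rw [hvw] at h4
      rw [hA1w] at hS
      linarith [hS.trans_eq h7]
    have h8 := mul_le_mul_of_nonneg_left hb_ge ht0.le
    have h9 : t * (t⁻¹ * a) = a := by field_simp
    linarith
  -- 2n ≤ (γ1+γ2) * b
  have hb2 : 2 * n ≤ (γ1 + γ2) * b := by
    set μ : ℝ := γ1 + lmax2 with hμ_def
    have hμpos : 0 < μ := by positivity
    have h4 := inv_quad_ge' hA2p v (μ⁻¹ • v)
    have hray : (S2 *ᵥ v) ⬝ᵥ v ≤ lmax2 * n :=
      rayleigh_ub' hS2.isHermitian (fun i => hlmax2.2 (Set.mem_range_self i)) v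
    have hq : ((γ1 • (1 : Matrix (Fin N) (Fin N) ℝ) + S2) *ᵥ v) ⬝ᵥ v ≤ μ * n := by
      rw [add_mulVec, smul_mulVec, one_mulVec, add_dotProduct, smul_dotProduct,
        smul_eq_mul]
      rw [hμ_def]; nlinarith
    have h5 : ((γ1 • (1 : Matrix (Fin N) (Fin N) ℝ) + S2) *ᵥ (μ⁻¹ • v)) ⬝ᵥ (μ⁻¹ • v)
        = μ⁻¹ * (μ⁻¹ * (((γ1 • (1 : Matrix (Fin N) (Fin N) ℝ) + S2) *ᵥ v) ⬝ᵥ v)) := by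
      rw [mulVec_smul, smul_dotProduct, dotProduct_smul, smul_eq_mul, smul_eq_mul]
    have h6 : v ⬝ᵥ (μ⁻¹ • v) = μ⁻¹ * n := by
      rw [dotProduct_smul, smul_eq_mul, ← hn_def]
    rw [h5, h6, ← hb_def] at h4
    have hinv : (0:ℝ) ≤ μ⁻¹ := inv_nonneg.mpr hμpos.le
    have h7 : μ⁻¹ * (μ⁻¹ * (μ * n)) = μ⁻¹ * n := by
      field_simp
    have h8 : μ⁻¹ * (μ⁻¹ * (((γ1 • (1 : Matrix (Fin N) (Fin N) ℝ) + S2) *ᵥ v) ⬝ᵥ v))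
        ≤ μ⁻¹ * n := by
      calc μ⁻¹ * (μ⁻¹ * (((γ1 • (1 : Matrix (Fin N) (Fin N) ℝ) + S2) *ᵥ v) ⬝ᵥ v))
          ≤ μ⁻¹ * (μ⁻¹ * (μ * n)) := by
            exact mul_le_mul_of_nonneg_left (mul_le_mul_of_nonneg_left hq hinv) hinv
        _ = μ⁻¹ * n := h7
    have hbμ : μ⁻¹ * n ≤ b := by linarith
    -- (γ1+γ2) ≥ 2μ
    have hc2 : 2 * μ ≤ γ1 + γ2 := by rw [hμ_def]; linarith
    have h10 := mul_le_mul_of_nonneg_left hbμ (by linarith : (0:ℝ) ≤ γ1 + γ2)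
    have h11 : 2 * μ * (μ⁻¹ * n) ≤ (γ1 + γ2) * (μ⁻¹ * n) :=
      mul_le_mul_of_nonneg_right hc2 (mul_nonneg hinv hn)
    have h12 : 2 * μ * (μ⁻¹ * n) = 2 * n := by
      field_simp
    linarith
  have hc : (0:ℝ) < γ1 + γ2 := by nlinarith
  have hcab : (γ1 + γ2) * a ≤ (γ1 + γ2) * (t * b) := mul_le_mul_of_nonneg_left hab hc.le
  have hkey : 0 ≤ (t - 1) * ((γ1 + γ2) * b - 2 * n) :=
    mul_nonneg (sub_nonneg.mpr ht) (by linarith)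
  nlinarith [hcab, hkey]
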